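/- Let F(x,y) = (y, -x + s(y)). A point (x,y) ∈ ℝ² has some iterate landing on the discontinuity line {y = 0} (i.e. there exists n ∈ ℕ with the second coordinate of Fⁿ(x,y) equal to 0) if and only if x ∈ ℤ or y ∈ ℤ. Consequently the critical set of F is exactly the integer grid (⋃_{k∈ℤ}{x=k}) ∪ (⋃_{ℓ∈ℤ}{y=ℓ}). -/
import Mathlib

noncomputable def s (y : ℝ) : ℝ := if 0 ≤ y then 1 else -1

noncomputable def F (q : ℝ × ℝ) : ℝ × ℝ := (q.2, -q.1 + s q.2)

lemma s_pos' {y : ℝ} (h : 0 ≤ y) : s y = 1 := if_pos h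
lemma s_neg' {y : ℝ} (h : y < 0) : s y = -1 := if_neg (not_le.mpr h)

lemma Fap' (a b c d : ℝ) (hs : s b = c) (h2 : -a + c = d) : F (a, b) = (b, d) := by
  show (b, -a + s b) = (b, d)
  rw [hs, h2]

lemma iter2 (p : ℝ × ℝ) : F^[2] p = F (F p) := rfl
lemma iter4 (p : ℝ × ℝ) : F^[4] p = F (F (F (F p))) := rfl

/-- base region step: x ≤ 1, m ≥ 2 -/
lemma stepA (x m : ℝ) (hx : x ≤ 1) (hm : 2 ≤ m) :
    F^[4] (x, m) = (x - 2, m - 2) := by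
  have e1 : F (x, m) = (m, -x + 1) := Fap' _ _ 1 _ (s_pos' (by linarith)) rfl
  have e2 : F (m, -x + 1) = (-x + 1, -m + 1) := Fap' _ _ 1 _ (s_pos' (by linarith)) rfl
  have e3 : F (-x + 1, -m + 1) = (-m + 1, x - 2) :=
    Fap' _ _ (-1) _ (s_neg' (by linarith)) (by ring)
  have e4 : F (-m + 1, x - 2) = (x - 2, m - 2) :=
    Fap' _ _ (-1) _ (s_neg' (by linarith)) (by ring)
  rw [iter4, e1, e2, e3, e4]

/-- Lemma A: x ≤ 1, m = k ∈ ℕ hits. -/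
lemma lemA : ∀ k : ℕ, ∀ x : ℝ, x ≤ 1 → ∃ n, (F^[n] (x, (k : ℝ))).2 = 0 := by
  intro k
  induction k using Nat.strong_induction_on with
  | _ k ih =>
    intro x hx
    match k with
    | 0 => exact ⟨0, by norm_num⟩
    | 1 =>
      refine ⟨2, ?_⟩
      have e1 : F (x, (1:ℝ)) = ((1:ℝ), -x + 1) := Fap' _ _ 1 _ (s_pos' (by norm_num)) rfl
      have e2 : F ((1:ℝ), -x + 1) = (-x + 1, 0) :=
        Fap' _ _ 1 _ (s_pos' (by linarith)) (by ring)
      push_cast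
      rw [iter2, e1, e2]
    | (j+2) =>
      obtain ⟨n, hn⟩ := ih j (by omega) (x - 2) (by linarith)
      refine ⟨n + 4, ?_⟩
      have hj : (0:ℝ) ≤ j := Nat.cast_nonneg j
      have e : F^[4] (x, ((j:ℝ) + 2)) = (x - 2, (j:ℝ)) := by
        have := stepA x ((j:ℝ) + 2) hx (by linarith)
        rwa [show (j:ℝ) + 2 - 2 = (j:ℝ) by ring] at this
      rw [Function.iterate_add_apply]
      push_cast
      rw [e]
      exact hn

/-- step for 1 < x < 2, m ≥ 0 : F⁴(x,m) = (x-2, m) -/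
lemma stepB1 (x m : ℝ) (h1 : 1 < x) (h2 : x < 2) (hm : 0 ≤ m) :
    F^[4] (x, m) = (x - 2, m) := by
  have e1 : F (x, m) = (m, -x + 1) := Fap' _ _ 1 _ (s_pos' hm) rfl
  have e2 : F (m, -x + 1) = (-x + 1, -m - 1) :=
    Fap' _ _ (-1) _ (s_neg' (by linarith)) (by ring)
  have e3 : F (-x + 1, -m - 1) = (-m - 1, x - 2) :=
    Fap' _ _ (-1) _ (s_neg' (by linarith)) (by ring)
  have e4 : F (-m - 1, x - 2) = (x - 2, m) :=
    Fap' _ _ (-1) _ (s_neg' (by linarith)) (by ring)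
  rw [iter4, e1, e2, e3, e4]

/-- step for x ≥ 2, m ≥ 0 : F⁴(x,m) = (x-2, m+2) -/
lemma stepB2 (x m : ℝ) (h1 : 2 ≤ x) (hm : 0 ≤ m) :
    F^[4] (x, m) = (x - 2, m + 2) := by
  have e1 : F (x, m) = (m, -x + 1) := Fap' _ _ 1 _ (s_pos' hm) rfl
  have e2 : F (m, -x + 1) = (-x + 1, -m - 1) :=
    Fap' _ _ (-1) _ (s_neg' (by linarith)) (by ring)
  have e3 : F (-x + 1, -m - 1) = (-m - 1, x - 2) :=
    Fap' _ _ (-1) _ (s_neg' (by linarith)) (by ring)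
  have e4 : F (-m - 1, x - 2) = (x - 2, m + 2) :=
    Fap' _ _ 1 _ (s_pos' (by linarith)) (by ring)
  rw [iter4, e1, e2, e3, e4]

/-- Lemma B : any x, nonneg integer second coordinate hits. -/
lemma lemB : ∀ kb : ℕ, ∀ x : ℝ, x ≤ 2*kb + 1 → ∀ m : ℕ, ∃ n, (F^[n] (x, (m:ℝ))).2 = 0 := by
  intro kb
  induction kb with
  | zero =>
    intro x hx m
    exact lemA m x (by push_cast at hx; linarith)
  | succ k ih =>
    intro x hx m
    rcases le_or_gt x 1 with h | h
    · exact lemA m x h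
    rcases lt_or_ge x 2 with h2 | h2
    · obtain ⟨n, hn⟩ := lemA m (x - 2) (by linarith)
      exact ⟨n + 4, by rw [Function.iterate_add_apply, stepB1 x _ h h2 (Nat.cast_nonneg m)]; exact hn⟩
    · obtain ⟨n, hn⟩ := ih (x - 2) (by push_cast at hx ⊢; linarith) (m + 2)
      refine ⟨n + 4, ?_⟩
      rw [Function.iterate_add_apply, stepB2 x _ h2 (Nat.cast_nonneg m)]
      push_cast at hn ⊢
      exact hn

/-- step for x > -1, v < 0 : F²(x,v) = (-x-1, -v-1) -/
lemma stepC1 (x v : ℝ) (h1 : -1 < x) (hv : v < 0) :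
    F^[2] (x, v) = (-x - 1, -v - 1) := by
  have e1 : F (x, v) = (v, -x - 1) := Fap' _ _ (-1) _ (s_neg' hv) (by ring)
  have e2 : F (v, -x - 1) = (-x - 1, -v - 1) :=
    Fap' _ _ (-1) _ (s_neg' (by linarith)) (by ring)
  rw [iter2, e1, e2]

/-- step for -2 ≤ x ≤ -1, v < 0 : F⁴(x,v) = (x+2, v) -/
lemma stepC2 (x v : ℝ) (h1 : -2 ≤ x) (h2 : x ≤ -1) (hv : v < 0) :
    F^[4] (x, v) = (x + 2, v) := by
  have e1 : F (x, v) = (v, -x - 1) := Fap' _ _ (-1) _ (s_neg' hv) (by ring)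
  have e2 : F (v, -x - 1) = (-x - 1, -v + 1) :=
    Fap' _ _ 1 _ (s_pos' (by linarith)) (by ring)
  have e3 : F (-x - 1, -v + 1) = (-v + 1, x + 2) :=
    Fap' _ _ 1 _ (s_pos' (by linarith)) (by ring)
  have e4 : F (-v + 1, x + 2) = (x + 2, v) :=
    Fap' _ _ 1 _ (s_pos' (by linarith)) (by ring)
  rw [iter4, e1, e2, e3, e4]

/-- step for x < -2, v < 0 : F⁴(x,v) = (x+2, v-2) -/
lemma stepC3 (x v : ℝ) (h1 : x < -2) (hv : v < 0) :
    F^[4] (x, v) = (x + 2, v - 2) := by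
  have e1 : F (x, v) = (v, -x - 1) := Fap' _ _ (-1) _ (s_neg' hv) (by ring)
  have e2 : F (v, -x - 1) = (-x - 1, -v + 1) :=
    Fap' _ _ 1 _ (s_pos' (by linarith)) (by ring)
  have e3 : F (-x - 1, -v + 1) = (-v + 1, x + 2) :=
    Fap' _ _ 1 _ (s_pos' (by linarith)) (by ring)
  have e4 : F (-v + 1, x + 2) = (x + 2, v - 2) :=
    Fap' _ _ (-1) _ (s_neg' (by linarith)) (by ring)
  rw [iter4, e1, e2, e3, e4]

lemma lemC1 (x : ℝ) (h1 : -1 < x) (m : ℕ) : ∃ n, (F^[n] (x, -(m:ℝ) - 1)).2 = 0 := by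
  have hm : (0:ℝ) ≤ m := Nat.cast_nonneg m
  obtain ⟨n, hn⟩ := lemA m (-x - 1) (by linarith)
  refine ⟨n + 2, ?_⟩
  rw [Function.iterate_add_apply, stepC1 x _ h1 (by linarith)]
  rw [show -(-(m:ℝ) - 1) - 1 = (m:ℝ) by ring]
  exact hn

/-- Lemma C : any x, negative integer second coordinate hits. -/
lemma lemC : ∀ kb : ℕ, ∀ x : ℝ, -(2*(kb:ℝ) + 1) ≤ x → ∀ m : ℕ,
    ∃ n, (F^[n] (x, -(m:ℝ) - 1)).2 = 0 := by
  intro kb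
  induction kb with
  | zero =>
    intro x hx m
    have hm : (0:ℝ) ≤ m := Nat.cast_nonneg m
    rcases lt_or_ge (-1 : ℝ) x with h | h
    · exact lemC1 x h m
    · have hx1 : x = -1 := by push_cast at hx; linarith
      subst hx1
      obtain ⟨n, hn⟩ := lemC1 (1 : ℝ) (by norm_num) m
      refine ⟨n + 4, ?_⟩
      rw [Function.iterate_add_apply, stepC2 (-1) _ (by norm_num) le_rfl (by linarith)]
      norm_num
      exact hn
  | succ k ih =>
    intro x hx m
    have hm : (0:ℝ) ≤ m := Nat.cast_nonneg m
    rcases lt_or_ge (-1 : ℝ) x with h | h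
    · exact lemC1 x h m
    rcases le_or_gt (-2 : ℝ) x with h2 | h2
    · obtain ⟨n, hn⟩ := lemC1 (x + 2) (by linarith) m
      exact ⟨n + 4, by rw [Function.iterate_add_apply, stepC2 x _ h2 h (by linarith)]; exact hn⟩
    · obtain ⟨n, hn⟩ := ih (x + 2) (by push_cast at hx ⊢; linarith) (m + 2)
      refine ⟨n + 4, ?_⟩
      rw [Function.iterate_add_apply, stepC3 x _ h2 (by linarith)]
      rw [show -(m:ℝ) - 1 - 2 = -((m:ℝ) + 2) - 1 by ring]
      push_cast at hn ⊢
      exact hn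

/-- integer second coordinate hits -/
lemma hitInt (x : ℝ) (l : ℤ) : ∃ n, (F^[n] (x, (l : ℝ))).2 = 0 := by
  rcases le_or_gt 0 l with hl | hl
  · obtain ⟨k, hk⟩ := exists_nat_ge x
    have := lemB k x (by push_cast; linarith) l.toNat
    rwa [show ((l.toNat : ℕ) : ℝ) = (l : ℝ) by exact_mod_cast Int.toNat_of_nonneg hl] at this
  · obtain ⟨k, hk⟩ := exists_nat_ge (-x)
    have := lemC k x (by push_cast; linarith) (-l - 1).toNat
    have hc : ((((-l - 1).toNat : ℕ)) : ℝ) = -(l:ℝ) - 1 := by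
      exact_mod_cast Int.toNat_of_nonneg (show (0:ℤ) ≤ -l - 1 by omega)
    rw [hc] at this
    rwa [show -(-(l:ℝ) - 1) - 1 = (l:ℝ) by ring] at this

/-- the mod-ℤ invariant -/
def J (a : ℝ) (t : ℝ) : Prop := ∃ i : ℤ, t = a + i ∨ t = -a + i

lemma invariant (x y : ℝ) : ∀ n : ℕ,
    (J x (F^[n] (x, y)).1 ∧ J y (F^[n] (x, y)).2) ∨
    (J y (F^[n] (x, y)).1 ∧ J x (F^[n] (x, y)).2) := by
  intro n
  induction n with
  | zero => exact Or.inl ⟨⟨0, Or.inl (by norm_num)⟩, ⟨0, Or.inl (by norm_num)⟩⟩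
  | succ n ih =>
    set p := F^[n] (x, y) with hp
    have hnext : F^[n+1] (x, y) = F p := by rw [Function.iterate_succ_apply']
    obtain ⟨e, he⟩ : ∃ e : ℤ, s p.2 = (e : ℝ) := by
      unfold s; split
      · exact ⟨1, by norm_num⟩
      · exact ⟨-1, by norm_num⟩
    have h1 : (F p).1 = p.2 := rfl
    have h2 : (F p).2 = -p.1 + s p.2 := rfl
    have key : ∀ a : ℝ, J a p.1 → J a (F p).2 := by
      rintro a ⟨i, hi | hi⟩
      · exact ⟨e - i, Or.inr (by rw [h2, hi, he]; push_cast; ring)⟩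
      · exact ⟨e - i, Or.inl (by rw [h2, hi, he]; push_cast; ring)⟩
    rcases ih with ⟨ha, hb⟩ | ⟨ha, hb⟩
    · right
      rw [hnext]
      exact ⟨by rw [h1]; exact hb, key x ha⟩
    · left
      rw [hnext]
      exact ⟨by rw [h1]; exact hb, key y ha⟩

theorem critical_set_pi_div_two (x y : ℝ) :
    (∃ n : ℕ, (F^[n] (x, y)).2 = 0) ↔
      (∃ k : ℤ, x = (k : ℝ)) ∨ (∃ ℓ : ℤ, y = (ℓ : ℝ)) := by
  constructor
  · rintro ⟨n, hn⟩
    rcases invariant x y n with ⟨_, h2⟩ | ⟨_, h2⟩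
    · right
      obtain ⟨i, hi | hi⟩ := h2 <;> rw [hn] at hi
      · exact ⟨-i, by push_cast; linarith⟩
      · exact ⟨i, by push_cast; linarith⟩
    · left
      obtain ⟨i, hi | hi⟩ := h2 <;> rw [hn] at hi
      · exact ⟨-i, by push_cast; linarith⟩
      · exact ⟨i, by push_cast; linarith⟩
  · rintro (⟨k, hk⟩ | ⟨l, hl⟩)
    · subst hk
      rcases le_or_gt 0 y with hy | hy
      · obtain ⟨n, hn⟩ := hitInt y (-k + 1)
        refine ⟨n + 1, ?_⟩
        have e : F ((k:ℝ), y) = (y, ((-k+1 : ℤ) : ℝ)) :=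
          Fap' _ _ 1 _ (s_pos' hy) (by push_cast; ring)
        rw [Function.iterate_add_apply, Function.iterate_one, e]
        exact hn
      · obtain ⟨n, hn⟩ := hitInt y (-k - 1)
        refine ⟨n + 1, ?_⟩
        have e : F ((k:ℝ), y) = (y, ((-k-1 : ℤ) : ℝ)) :=
          Fap' _ _ (-1) _ (s_neg' hy) (by push_cast; ring)
        rw [Function.iterate_add_apply, Function.iterate_one, e]
        exact hn
    · subst hl
      exact hitInt x l
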